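/- Let M be a cm-monoid or an am-monoid. Then the set M_Fin of finite dimensional elements and the set M_ωFin of ω-finite dimensional elements are pointed merge subalgebras of the merge reduct of M: each contains the unit 1 and is closed under every operation ⋆_n and every σ̄. -/
import Mathlib


universe u

open scoped Classical

/-- A finite permutation of ω: an element of S_ω, i.e. a permutation moving
only finitely many points. -/
def FinPerm (σ : Equiv.Perm ℕ) : Prop := {n : ℕ | σ n ≠ n}.Finite

/-- The raw operations of a merge algebra: the binary merges `⋆_n` and the
actions `σ̄` of (finite) permutations. -/
structure MergeOps (A : Type u) where
  star : ℕ → A → A → A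
  bar : Equiv.Perm ℕ → A → A

namespace MergeOps

variable {A : Type u}

/-- `chain g k = ((g 0 ⋆_1 g 1) ⋆_2 g 2) … ⋆_k (g k)`. -/
def chain (M : MergeOps A) (g : ℕ → A) : ℕ → A
  | 0 => g 0
  | i + 1 => M.star (i + 1) (M.chain g i) (g (i + 1))

/-- `chainStar g k y = ((…(g 0 ⋆_1 g 1) ⋆_2 …) ⋆_{k-1} g (k-1)) ⋆_k y`. -/
def chainStar (M : MergeOps A) (g : ℕ → A) (k : ℕ) (y : A) : A :=
  match k with
  | 0 => y
  | k + 1 => M.star (k + 1) (M.chain g k) y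

/-- The `n`-coordinate of `x` relative to the coordinator `pt`:
`x[n] = τ̄^n_0(x) ⋆_1 pt`. -/
def coord (M : MergeOps A) (pt x : A) (n : ℕ) : A :=
  M.star 1 (M.bar (Equiv.swap 0 n) x) pt

end MergeOps

/-- A merge algebra: operations `⋆_n` and `σ̄` satisfying axioms (B1)–(B7). -/
structure MergeAlgebra (A : Type u) extends MergeOps A where
  /-- (B1) each `⋆_n` is associative -/
  star_assoc : ∀ (n : ℕ) (x y z : A), star n (star n x y) z = star n x (star n y z)
  /-- (B1) each `⋆_n` is idempotent -/
  star_idem : ∀ (n : ℕ) (x : A), star n x x = x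
  /-- (B2) -/
  star_zero : ∀ x y : A, star 0 x y = y
  /-- (B3), first part (k ≥ n) -/
  B3a : ∀ {n k : ℕ}, n ≤ k → ∀ x y z : A, star n (star k x y) z = star n x z
  /-- (B3), second part (k ≥ n) -/
  B3b : ∀ {n k : ℕ}, n ≤ k → ∀ x y z : A, star k x (star n y z) = star k x z
  /-- (B4) (k < n) -/
  B4 : ∀ {n k : ℕ}, k < n → ∀ x y z : A, star n (star k x y) z = star k x (star n y z)
  /-- (B5) `σ̄(τ̄(x)) = (τ∘σ)‾(x)` -/
  B5 : ∀ σ τ : Equiv.Perm ℕ, FinPerm σ → FinPerm τ → ∀ x : A,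
      bar σ (bar τ x) = bar (τ * σ) x
  /-- (B5) `ῑ(x) = x` -/
  bar_id : ∀ x : A, bar 1 x = x
  /-- (B6): for `n ≤ k` and `σ` a permutation of `k`, with `f i = x` iff `σ i < n`:
  `σ̄(x ⋆_n y) = ((…(σ̄(f 0) ⋆_1 σ̄(f 1)) ⋆_2 …) ⋆_{k-1} σ̄(f (k-1))) ⋆_k y`. -/
  B6 : ∀ {n k : ℕ}, n ≤ k → ∀ σ : Equiv.Perm ℕ, (∀ i, k ≤ i → σ i = i) →
      ∀ x y : A, bar σ (star n x y) =
        toMergeOps.chainStar (fun i => bar σ (if σ i < n then x else y)) k y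
  /-- (B7) -/
  B7 : ∀ {m n : ℕ} (σ τ : Equiv.Perm ℕ), FinPerm σ → FinPerm τ →
      (∀ i, m ≤ i → i < n → σ i = τ i) →
      ∀ x y z : A, star n (star m z (bar σ x)) y = star n (star m z (bar τ x)) y

/-- An m-monoid: a monoid structure together with a merge algebra structure on
the same carrier, satisfying right distributivity (L1). -/
structure MMonoid (A : Type u) extends MergeAlgebra A where
  mul : A → A → A
  one : A
  mul_assoc : ∀ x y z : A, mul (mul x y) z = mul x (mul y z)
  one_mul : ∀ x : A, mul one x = x
  mul_one : ∀ x : A, mul x one = x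
  /-- (L1) right distributivity -/
  L1 : ∀ (n : ℕ) (x y z : A), mul (star n x y) z = star n (mul x z) (mul y z)

namespace MMonoid

variable {A : Type u} (M : MMonoid A)

/-- A cm-monoid is an m-monoid satisfying (L2): `σ̄(x)·y = σ̄(x·y)`. -/
def IsCM : Prop :=
  ∀ σ : Equiv.Perm ℕ, FinPerm σ → ∀ x y : A, M.mul (M.bar σ x) y = M.bar σ (M.mul x y)

/-- An am-monoid is an m-monoid satisfying (L3): `σ̄(x·y) = σ̄(x)·σ̄(y)`. -/
def IsAM : Prop :=
  ∀ σ : Equiv.Perm ℕ, FinPerm σ → ∀ x y : A, M.bar σ (M.mul x y) = M.mul (M.bar σ x) (M.bar σ y)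

/-- The `n`-coordinate `x[n] = τ̄^n_0(x) ⋆_1 1` (the coordinator is the unit). -/
def coord (x : A) (n : ℕ) : A := M.toMergeOps.coord M.one x n

/-- Extensionality: elements with the same coordinates are equal. -/
def Extensional : Prop := ∀ x y : A, (∀ n : ℕ, M.coord x n = M.coord y n) → x = y

/-- An element has rank ≤ n iff `x ⋆_n 1 = x`; the m-monoid is finitely ranked
if every element has finite rank. -/
def FinitelyRanked : Prop := ∀ x : A, ∃ n : ℕ, M.star n x M.one = x

/-- A degenerate m-monoid. -/
def Degenerate : Prop :=
  (∀ σ : Equiv.Perm ℕ, FinPerm σ → ∀ x : A, M.bar σ x = x) ∧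
    (∀ (n : ℕ) (x y : A), M.star n x y = y)

/-- `a` is finite dimensional: for every `n` there is `m` with
`(a·(1 ⋆_m b ⋆_{m+k} 1)) ⋆_n a = a` for all `b` and `k`. -/
def FinDimEl (a : A) : Prop :=
  ∀ n : ℕ, ∃ m : ℕ, ∀ (b : A) (k : ℕ),
    M.star n (M.mul a (M.star (m + k) (M.star m M.one b) M.one)) a = a

/-- `a` is ω-finite dimensional: for every `n` there is `m` with
`(a·(1 ⋆_m b)) ⋆_n a = a` for all `b`. -/
def OmegaFinDimEl (a : A) : Prop :=
  ∀ n : ℕ, ∃ m : ℕ, ∀ b : A,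
    M.star n (M.mul a (M.star m M.one b)) a = a

/-- An m-monoid is finite dimensional if every element is. -/
def FinDim : Prop := ∀ a : A, M.FinDimEl a

/-- An m-monoid is ω-finite dimensional if every element is. -/
def OmegaFinDim : Prop := ∀ a : A, M.OmegaFinDimEl a

end MMonoid

section AuxProof

variable {A : Type u}

private lemma finPerm_inv {σ : Equiv.Perm ℕ} (h : FinPerm σ) : FinPerm σ⁻¹ := by
  refine h.subset fun n hn => ?_
  simp only [Set.mem_setOf_eq] at *
  intro he
  apply hn
  rw [Equiv.Perm.inv_eq_iff_eq]
  exact he.symm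

private lemma exists_bound (σ : Equiv.Perm ℕ) (hσ : FinPerm σ) :
    ∃ K : ℕ, 1 ≤ K ∧ ∀ i, K ≤ i → σ i = i := by
  obtain ⟨B, hB⟩ := hσ.bddAbove
  refine ⟨B + 1, by omega, fun i hi => ?_⟩
  by_contra hne
  have hmem : i ∈ {n : ℕ | σ n ≠ n} := hne
  have := hB hmem
  omega

private lemma chain_eq_const (M : MergeAlgebra A) (g : ℕ → A) (x : A) :
    ∀ j, (∀ i, i ≤ j → g i = x) → M.toMergeOps.chain g j = x := by
  intro j
  induction j with
  | zero => intro h; simpa [MergeOps.chain] using h 0 le_rfl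
  | succ j ih =>
    intro h
    simp only [MergeOps.chain]
    rw [ih (fun i hi => h i (le_trans hi (Nat.le_succ j))), h (j + 1) le_rfl, M.star_idem]

private lemma bar_star_high (M : MergeAlgebra A) (σ : Equiv.Perm ℕ) {N : ℕ}
    (hN1 : 1 ≤ N) (hfix : ∀ i, N ≤ i → σ i = i) (x y : A) :
    M.bar σ (M.star N x y) = M.star N (M.bar σ x) y := by
  have hlt : ∀ i, i < N → σ i < N := by
    intro i hi
    by_contra hge
    push_neg at hge
    have h2 : σ i = i := σ.injective (hfix (σ i) hge)
    omega
  rw [M.B6 (le_refl N) σ hfix x y]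
  obtain ⟨N', rfl⟩ : ∃ N', N = N' + 1 := ⟨N - 1, by omega⟩
  simp only [MergeOps.chainStar]
  congr 1
  apply chain_eq_const
  intro i hi
  have : σ i < N' + 1 := hlt i (by omega)
  simp [this]

/-- `x ⋆_n (x ⋆_N y) = x ⋆_N y` for `n ≤ N`. -/
private lemma absorb (M : MergeAlgebra A) {n N : ℕ} (h : n ≤ N) (u a : A) :
    M.star n u (M.star N u a) = M.star N u a := by
  rcases eq_or_lt_of_le h with rfl | hlt
  · rw [← M.star_assoc, M.star_idem]
  · rw [← M.B4 hlt, M.star_idem]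

private lemma findim_shift (M : MMonoid A) {n m₀ m : ℕ} (h : m₀ ≤ m) {a : A}
    (H : ∀ (b : A) (k : ℕ),
      M.star n (M.mul a (M.star (m₀ + k) (M.star m₀ M.one b) M.one)) a = a) :
    ∀ (b : A) (k : ℕ),
      M.star n (M.mul a (M.star (m + k) (M.star m M.one b) M.one)) a = a := by
  intro b k
  have h1 : M.star m M.one b = M.star m₀ M.one (M.star m M.one b) :=
    (absorb M.toMergeAlgebra h M.one b).symm
  have h2 : m + k = m₀ + (m - m₀ + k) := by omega
  rw [h1, h2]
  exact H (M.star m M.one b) (m - m₀ + k)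

private lemma omega_shift (M : MMonoid A) {n m₀ m : ℕ} (h : m₀ ≤ m) {a : A}
    (H : ∀ b : A, M.star n (M.mul a (M.star m₀ M.one b)) a = a) :
    ∀ b : A, M.star n (M.mul a (M.star m M.one b)) a = a := by
  intro b
  have h1 : M.star m M.one b = M.star m₀ M.one (M.star m M.one b) :=
    (absorb M.toMergeAlgebra h M.one b).symm
  rw [h1]
  exact H (M.star m M.one b)

private lemma star_closed_aux (M : MMonoid A) {n p : ℕ} {x y c : A}
    (hx : M.star n (M.mul x c) x = x) (hy : M.star n (M.mul y c) y = y) :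
    M.star n (M.mul (M.star p x y) c) (M.star p x y) = M.star p x y := by
  rw [M.L1]
  rcases le_or_gt n p with h | h
  · rcases eq_or_lt_of_le h with rfl | h'
    · rw [M.B3a le_rfl, ← M.star_assoc, hx]
    · rw [M.B3a (le_of_lt h'), ← M.B4 h', hx]
  · rw [M.B4 h, M.B3b (le_of_lt h), hy]
    calc M.star p (M.mul x c) y
        = M.star p (M.star n (M.mul x c) x) y := (M.B3a (le_of_lt h) _ _ _).symm
      _ = M.star p x y := by rw [hx]

private lemma am_bar_one (M : MMonoid A) (ham : M.IsAM) (σ : Equiv.Perm ℕ)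
    (hσ : FinPerm σ) : M.bar σ M.one = M.one := by
  have hσ' := finPerm_inv hσ
  have he : M.bar σ (M.bar σ⁻¹ M.one) = M.one := by
    rw [M.B5 σ σ⁻¹ hσ hσ', inv_mul_cancel, M.bar_id]
  have h := ham σ hσ (M.bar σ⁻¹ M.one) M.one
  rw [M.mul_one] at h
  rw [he] at h
  rw [M.one_mul] at h
  exact h.symm

/-- The key multiplication-commutation: `σ̄(a)·c = σ̄(a·c)` where
`c = (1 ⋆_m b) ⋆_{m+k} 1` and `σ` fixes all `i ≥ m`, `m ≥ 1`. -/
private lemma bar_mul_c (M : MMonoid A) (h : M.IsCM ∨ M.IsAM) (σ : Equiv.Perm ℕ)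
    (hσ : FinPerm σ) {m : ℕ} (hm1 : 1 ≤ m) (hmfix : ∀ i, m ≤ i → σ i = i)
    (a b : A) (k : ℕ) :
    M.mul (M.bar σ a) (M.star (m + k) (M.star m M.one b) M.one)
      = M.bar σ (M.mul a (M.star (m + k) (M.star m M.one b) M.one)) := by
  rcases h with hcm | ham
  · exact hcm σ hσ a _
  · have hbc : M.bar σ (M.star (m + k) (M.star m M.one b) M.one)
        = M.star (m + k) (M.star m M.one b) M.one := by
      rw [bar_star_high M.toMergeAlgebra σ (by omega)
          (fun i hi => hmfix i (by omega)) (M.star m M.one b) M.one,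
        bar_star_high M.toMergeAlgebra σ hm1 hmfix M.one b,
        am_bar_one M ham σ hσ]
    rw [ham σ hσ a _, hbc]

/-- Same for the ω-form `c = 1 ⋆_m b`. -/
private lemma bar_mul_c' (M : MMonoid A) (h : M.IsCM ∨ M.IsAM) (σ : Equiv.Perm ℕ)
    (hσ : FinPerm σ) {m : ℕ} (hm1 : 1 ≤ m) (hmfix : ∀ i, m ≤ i → σ i = i)
    (a b : A) :
    M.mul (M.bar σ a) (M.star m M.one b) = M.bar σ (M.mul a (M.star m M.one b)) := by
  rcases h with hcm | ham
  · exact hcm σ hσ a _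
  · have hbc : M.bar σ (M.star m M.one b) = M.star m M.one b := by
      rw [bar_star_high M.toMergeAlgebra σ hm1 hmfix M.one b, am_bar_one M ham σ hσ]
    rw [ham σ hσ a _, hbc]

end AuxProof

/-- STATEMENT 13: if `M` is a cm-monoid or an am-monoid, then the sets of
finite dimensional and of ω-finite dimensional elements are pointed merge
subalgebras of the merge reduct of `M`: each contains the unit and is closed
under every `⋆_n` and every `σ̄` (for finite permutations). -/
theorem findim_merge_subalgebras {A : Type u} (M : MMonoid A)
    (h : M.IsCM ∨ M.IsAM) :
    (M.FinDimEl M.one ∧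
      (∀ (n : ℕ) (x y : A), M.FinDimEl x → M.FinDimEl y → M.FinDimEl (M.star n x y)) ∧
      (∀ σ : Equiv.Perm ℕ, FinPerm σ → ∀ x : A, M.FinDimEl x → M.FinDimEl (M.bar σ x))) ∧
    (M.OmegaFinDimEl M.one ∧
      (∀ (n : ℕ) (x y : A),
        M.OmegaFinDimEl x → M.OmegaFinDimEl y → M.OmegaFinDimEl (M.star n x y)) ∧
      (∀ σ : Equiv.Perm ℕ, FinPerm σ → ∀ x : A,
        M.OmegaFinDimEl x → M.OmegaFinDimEl (M.bar σ x))) := by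
  refine ⟨⟨?_, ?_, ?_⟩, ?_, ?_, ?_⟩
  · -- 1 is finite dimensional
    intro n
    refine ⟨n, fun b k => ?_⟩
    rw [M.one_mul, M.B3a (Nat.le_add_right n k), M.B3a le_rfl, M.star_idem]
  · -- closure of FinDimEl under ⋆_p
    intro p x y hx hy n
    obtain ⟨mx, hmx⟩ := hx n
    obtain ⟨my, hmy⟩ := hy n
    refine ⟨max mx my, fun b k => ?_⟩
    exact star_closed_aux M
      (findim_shift M (le_max_left mx my) hmx b k)
      (findim_shift M (le_max_right mx my) hmy b k)
  · -- closure of FinDimEl under σ̄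
    intro σ hσ a ha
    obtain ⟨K, hK1, hKfix⟩ := exists_bound σ hσ
    intro n
    obtain ⟨m₀, hm₀⟩ := ha (max n K)
    have hN1 : 1 ≤ max n K := le_trans hK1 (le_max_right n K)
    have hNfix : ∀ i, max n K ≤ i → σ i = i :=
      fun i hi => hKfix i (le_trans (le_max_right n K) hi)
    refine ⟨max m₀ K, fun b k => ?_⟩
    have hm1 : 1 ≤ max m₀ K := le_trans hK1 (le_max_right m₀ K)
    have hmfix : ∀ i, max m₀ K ≤ i → σ i = i :=
      fun i hi => hKfix i (le_trans (le_max_right m₀ K) hi)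
    have hmain : M.star (max n K)
        (M.mul a (M.star (max m₀ K + k) (M.star (max m₀ K) M.one b) M.one)) a = a :=
      findim_shift M (le_max_left m₀ K) hm₀ b k
    have hC : M.star (max n K)
        (M.bar σ (M.mul a (M.star (max m₀ K + k) (M.star (max m₀ K) M.one b) M.one))) a
        = M.bar σ a := by
      rw [← bar_star_high M.toMergeAlgebra σ hN1 hNfix, hmain]
    rw [bar_mul_c M h σ hσ hm1 hmfix a b k, ← hC]
    exact absorb M.toMergeAlgebra (le_max_left n K) _ _
  · -- 1 is ω-finite dimensional
    intro n
    refine ⟨n, fun b => ?_⟩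
    rw [M.one_mul, M.B3a le_rfl, M.star_idem]
  · -- closure of OmegaFinDimEl under ⋆_p
    intro p x y hx hy n
    obtain ⟨mx, hmx⟩ := hx n
    obtain ⟨my, hmy⟩ := hy n
    refine ⟨max mx my, fun b => ?_⟩
    exact star_closed_aux M
      (omega_shift M (le_max_left mx my) hmx b)
      (omega_shift M (le_max_right mx my) hmy b)
  · -- closure of OmegaFinDimEl under σ̄
    intro σ hσ a ha
    obtain ⟨K, hK1, hKfix⟩ := exists_bound σ hσ
    intro n
    obtain ⟨m₀, hm₀⟩ := ha (max n K)
    have hN1 : 1 ≤ max n K := le_trans hK1 (le_max_right n K)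
    have hNfix : ∀ i, max n K ≤ i → σ i = i :=
      fun i hi => hKfix i (le_trans (le_max_right n K) hi)
    refine ⟨max m₀ K, fun b => ?_⟩
    have hm1 : 1 ≤ max m₀ K := le_trans hK1 (le_max_right m₀ K)
    have hmfix : ∀ i, max m₀ K ≤ i → σ i = i :=
      fun i hi => hKfix i (le_trans (le_max_right m₀ K) hi)
    have hmain : M.star (max n K) (M.mul a (M.star (max m₀ K) M.one b)) a = a :=
      omega_shift M (le_max_left m₀ K) hm₀ b
    have hC : M.star (max n K)
        (M.bar σ (M.mul a (M.star (max m₀ K) M.one b))) a = M.bar σ a := by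
      rw [← bar_star_high M.toMergeAlgebra σ hN1 hNfix, hmain]
    rw [bar_mul_c' M h σ hσ hm1 hmfix a b, ← hC]
    exact absorb M.toMergeAlgebra (le_max_left n K) _ _
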